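/- The function g(y) = 1/sin(y)^2 - 1/y^2 is monotonically increasing on (0, π). -/

import Mathlib

open Real

private lemma sin_ge_taylor (x : ℝ) (hx : 0 ≤ x) : x - x ^ 3 / 6 ≤ Real.sin x := by
  have hmono : MonotoneOn (fun x : ℝ => Real.sin x - x + x ^ 3 / 6) (Set.Ici 0) := by
    apply monotoneOn_of_deriv_nonneg (convex_Ici 0)
    · fun_prop
    · fun_prop
    · intro y hy
      have h : HasDerivAt (fun x : ℝ => Real.sin x - x + x ^ 3 / 6)
          (Real.cos y - 1 + 3 * y ^ 2 / 6) y := by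
        have := ((Real.hasDerivAt_sin y).sub (hasDerivAt_id y)).add
          ((hasDerivAt_pow 3 y).div_const 6)
        exact this.congr_deriv (by norm_num)
      rw [h.deriv]
      nlinarith [Real.one_sub_sq_div_two_le_cos (x := y)]
  have := hmono (Set.self_mem_Ici) (Set.mem_Ici.mpr hx) hx
  simp only [Real.sin_zero] at this
  nlinarith [this]

private lemma cos_le_taylor (x : ℝ) (hx : 0 ≤ x) : Real.cos x ≤ 1 - x ^ 2 / 2 + x ^ 4 / 24 := by
  have hmono : MonotoneOn (fun x : ℝ => 1 - x ^ 2 / 2 + x ^ 4 / 24 - Real.cos x) (Set.Ici 0) := by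
    apply monotoneOn_of_deriv_nonneg (convex_Ici 0)
    · fun_prop
    · fun_prop
    · intro y hy
      rw [interior_Ici] at hy
      have h : HasDerivAt (fun x : ℝ => 1 - x ^ 2 / 2 + x ^ 4 / 24 - Real.cos x)
          (0 - 2 * y ^ 1 / 2 + 4 * y ^ 3 / 24 - -Real.sin y) y := by
        exact (((hasDerivAt_const y (1:ℝ)).sub ((hasDerivAt_pow 2 y).div_const 2)).add
          ((hasDerivAt_pow 4 y).div_const 24)).sub (Real.hasDerivAt_cos y)
      rw [h.deriv]
      have := sin_ge_taylor y (le_of_lt hy)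
      nlinarith [this]
  have := hmono (Set.self_mem_Ici) (Set.mem_Ici.mpr hx) hx
  simp only [Real.cos_zero] at this
  nlinarith [this]

private lemma key_ineq (x : ℝ) (hx : 0 < x) (hxp : x < π) :
    x ^ 3 * Real.cos x < Real.sin x ^ 3 := by
  have hs : 0 < Real.sin x := Real.sin_pos_of_pos_of_lt_pi hx hxp
  rcases le_or_gt (Real.cos x) 0 with hc | hc
  · have h0 : x ^ 3 * Real.cos x ≤ 0 :=
      mul_nonpos_of_nonneg_of_nonpos (pow_pos hx 3).le hc
    linarith [pow_pos hs 3]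
  · -- cos x > 0 so x < π/2 < 3
    have hx2 : x < π / 2 := by
      by_contra h
      push_neg at h
      have : Real.cos x ≤ 0 := Real.cos_nonpos_of_pi_div_two_le_of_le h (by linarith)
      linarith
    have hx3 : x < 2 := lt_of_lt_of_le hx2 (by nlinarith [Real.pi_lt_d2])
    have hsge := sin_ge_taylor x hx.le
    have hcle := cos_le_taylor x hx.le
    have hpos : 0 < x - x ^ 3 / 6 := by nlinarith
    have h1 : (x - x ^ 3 / 6) ^ 3 ≤ Real.sin x ^ 3 :=
      pow_le_pow_left₀ hpos.le hsge 3
    have h9 : 0 < x ^ 7 * (9 - x ^ 2) := mul_pos (pow_pos hx 7) (by nlinarith)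
    have hm : x ^ 3 * Real.cos x ≤ x ^ 3 * (1 - x ^ 2 / 2 + x ^ 4 / 24) :=
      mul_le_mul_of_nonneg_left hcle (pow_pos hx 3).le
    have h2 : x ^ 3 * (1 - x ^ 2 / 2 + x ^ 4 / 24) < (x - x ^ 3 / 6) ^ 3 := by nlinarith
    linarith

theorem stmt_1 :
    MonotoneOn (fun y : ℝ => 1 / Real.sin y ^ 2 - 1 / y ^ 2) (Set.Ioo 0 π) := by
  have h : StrictMonoOn (fun y : ℝ => 1 / Real.sin y ^ 2 - 1 / y ^ 2) (Set.Ioo 0 π) := by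
    apply strictMonoOn_of_deriv_pos (convex_Ioo 0 π)
    · apply ContinuousOn.sub
      · apply ContinuousOn.div continuousOn_const (Real.continuous_sin.continuousOn.pow 2)
        intro y hy
        have : 0 < Real.sin y := Real.sin_pos_of_pos_of_lt_pi hy.1 hy.2
        exact pow_ne_zero 2 this.ne'
      · apply ContinuousOn.div continuousOn_const (continuousOn_pow 2)
        intro y hy
        have := hy.1
        positivity
    · intro y hy
      rw [interior_Ioo] at hy
      obtain ⟨hy0, hyp⟩ := hy
      have hs : 0 < Real.sin y := Real.sin_pos_of_pos_of_lt_pi hy0 hyp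
      have hd : HasDerivAt (fun y : ℝ => 1 / Real.sin y ^ 2 - 1 / y ^ 2)
          (-(2 * Real.sin y ^ 1 * Real.cos y) / (Real.sin y ^ 2) ^ 2
            - -(2 * y ^ 1) / (y ^ 2) ^ 2) y := by
        have h1 : HasDerivAt (fun y : ℝ => 1 / Real.sin y ^ 2)
            (-(2 * Real.sin y ^ 1 * Real.cos y) / (Real.sin y ^ 2) ^ 2) y := by
          simp only [one_div]
          exact (((Real.hasDerivAt_sin y).pow 2).inv (pow_ne_zero 2 hs.ne')).congr_deriv (by norm_num)
        have h2 : HasDerivAt (fun y : ℝ => 1 / y ^ 2)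
            (-(2 * y ^ 1) / (y ^ 2) ^ 2) y := by
          simp only [one_div]
          exact (((hasDerivAt_pow 2 y)).inv (by positivity)).congr_deriv (by norm_num)
        exact h1.sub h2
      rw [hd.deriv]
      have hkey := key_ineq y hy0 hyp
      have hy4 : (0:ℝ) < y ^ 4 := by positivity
      have hs4 : (0:ℝ) < Real.sin y ^ 4 := by positivity
      rw [pow_one, pow_one]
      rw [sub_pos, div_lt_div_iff₀ (by positivity) (by positivity)]
      ring_nf
      nlinarith [mul_pos hy4 hs4, mul_pos hy0 hs]
  exact h.monotoneOn
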